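/- Let K be a finite field with q elements, let L be a field extension of K of degree n, and let α ∈ L be a primitive element (a generator of the multiplicative group Lˣ) whose minimal polynomial over K therefore has degree n. Let 𝓜 = [m̄_{il}] be an m×m superregular matrix over K. Let t and j be integers with t > 1, j > 1, j ≤ m, and j·(t−1) < n, and for 1 ≤ i ≤ j and 1 ≤ l ≤ m fix elements n_{il} ∈ K. Define the m×m matrix N over L by: N_{il} = (algebraMap K L m̄_{il})·α + (algebraMap K L n_{il})·α^t for 1 ≤ i ≤ j, and N_{il} = (algebraMap K L m̄_{il})·α for j < i ≤ m. Then N is superregular over L (and consequently so is any matrix obtained from N by permuting its rows). -/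

import Mathlib

def IsSuperregular {F : Type*} [Field F] {I J : Type*} (A : Matrix I J F) : Prop :=
  ∀ (k : ℕ), 1 ≤ k → ∀ (r : Fin k → I) (c : Fin k → J),
    Function.Injective r → Function.Injective c →
    (Matrix.of fun i j => A (r i) (c j)).det ≠ 0

open Polynomial in
theorem natDegree_det_le_sum {R : Type*} [CommRing R] {k : ℕ}
    (P : Matrix (Fin k) (Fin k) R[X]) (d : Fin k → ℕ)
    (h : ∀ i l, (P i l).natDegree ≤ d i) :
    P.det.natDegree ≤ ∑ i, d i := by
  rw [Matrix.det_apply]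
  refine Polynomial.natDegree_sum_le_of_forall_le _ _ (fun σ _ => ?_)
  have key : (∏ i, P (σ i) i).natDegree ≤ ∑ i, d i :=
    calc (∏ i, P (σ i) i).natDegree ≤ ∑ i, (P (σ i) i).natDegree :=
          Polynomial.natDegree_prod_le _ _
      _ ≤ ∑ i, d (σ i) := Finset.sum_le_sum fun i _ => h (σ i) i
      _ = ∑ i, d i := Equiv.sum_comp σ d
  rcases Int.units_eq_one_or (Equiv.Perm.sign σ) with hs | hs <;> rw [hs]
  · rwa [one_smul]
  · rw [Units.neg_smul, one_smul, natDegree_neg]; exact key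

open Polynomial in
set_option maxHeartbeats 1000000 in
theorem isSuperregular_rows_perturbation {K L : Type*} [Field K] [Fintype K] [Field L]
    [Fintype L] [Algebra K L] {q n : ℕ} (hq : Fintype.card K = q)
    (hn : Module.finrank K L = n)
    (α : L) (hα : ∀ x : L, x ≠ 0 → ∃ i : ℕ, x = α ^ i)
    {m : ℕ} (Mbar : Matrix (Fin m) (Fin m) K) (hMbar : IsSuperregular Mbar)
    (t j : ℕ) (ht : 1 < t) (hj : 1 < j) (hjm : j ≤ m) (hjtn : j * (t - 1) < n)
    (nc : Fin m → Fin m → K) :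
    ∀ ω : Equiv.Perm (Fin m),
      IsSuperregular (Matrix.of fun i l : Fin m =>
        if ((ω i : Fin m) : ℕ) < j then
          algebraMap K L (Mbar (ω i) l) * α + algebraMap K L (nc (ω i) l) * α ^ t
        else
          algebraMap K L (Mbar (ω i) l) * α) := by
  classical
  have hfd : Module.Finite K L := Module.Finite.of_finite
  have hint : IsIntegral K α := IsIntegral.of_finite K α
  have htop : IntermediateField.adjoin K {α} = ⊤ := by
    rw [eq_top_iff]
    intro x _
    rcases eq_or_ne x 0 with hx | hx
    · exact hx ▸ zero_mem _
    · obtain ⟨i, hi⟩ := hα x hx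
      rw [hi]
      exact pow_mem (IntermediateField.mem_adjoin_simple_self K α) i
  have hdeg : (minpoly K α).natDegree = n := by
    rw [← IntermediateField.adjoin.finrank hint, htop, IntermediateField.finrank_top', hn]
  have h2n : 2 ≤ n := by
    have h1 : 2 * 1 ≤ j * (t - 1) := Nat.mul_le_mul (by omega) (by omega)
    omega
  have hα0 : α ≠ 0 := by
    intro h
    rw [h, minpoly.zero, natDegree_X] at hdeg
    omega
  intro ω k hk r c hr hc
  set P : Matrix (Fin k) (Fin k) K[X] := Matrix.of fun i l =>
    C (Mbar (ω (r i)) (c l)) +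
      (if ((ω (r i) : Fin m) : ℕ) < j then C (nc (ω (r i)) (c l)) * X ^ (t - 1) else 0)
    with hP
  -- the submatrix equals α • (P mapped through aeval α)
  have hB : (Matrix.of fun i l => (Matrix.of fun i l : Fin m =>
        if ((ω i : Fin m) : ℕ) < j then
          algebraMap K L (Mbar (ω i) l) * α + algebraMap K L (nc (ω i) l) * α ^ t
        else
          algebraMap K L (Mbar (ω i) l) * α) (r i) (c l))
      = α • (P.map (aeval α)) := by
    ext i l
    have hpow : α ^ t = α * α ^ (t - 1) := by
      conv_lhs => rw [show t = (t - 1) + 1 by omega]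
      ring
    by_cases hcase : ((ω (r i) : Fin m) : ℕ) < j <;>
      simp [hP, Matrix.smul_apply, hcase, hpow, smul_eq_mul] <;> ring
  -- key: aeval α P.det ≠ 0
  have hcoeff : P.det.coeff 0 ≠ 0 := by
    have hev : P.map (eval 0) = Matrix.of fun i l => Mbar (ω (r i)) (c l) := by
      ext i l
      by_cases hcase : ((ω (r i) : Fin m) : ℕ) < j <;>
        simp [hP, hcase, zero_pow (show t - 1 ≠ 0 by omega)]
    have h1 : Polynomial.evalRingHom (0 : K) P.det = (P.map (eval 0)).det :=
      (Polynomial.evalRingHom (0 : K)).map_det P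
    rw [coeff_zero_eq_eval_zero]
    show Polynomial.evalRingHom (0 : K) P.det ≠ 0
    rw [h1, hev]
    exact hMbar k hk (fun i => ω (r i)) c (ω.injective.comp hr) hc
  have hPne : P.det ≠ 0 := fun h => hcoeff (by simp [h])
  have hcard : (Finset.univ.filter
      (fun i : Fin k => ((ω (r i) : Fin m) : ℕ) < j)).card ≤ j := by
    have := Finset.card_le_card_of_injOn (f := fun i : Fin k => ((ω (r i) : Fin m) : ℕ))
      (s := Finset.univ.filter (fun i : Fin k => ((ω (r i) : Fin m) : ℕ) < j))
      (t := Finset.range j)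
      (fun a ha => Finset.mem_range.mpr (Finset.mem_filter.mp ha).2)
      (fun a _ b _ hab => hr (ω.injective (Fin.val_injective hab)))
    simpa using this
  have hdegP : P.det.natDegree ≤ j * (t - 1) := by
    have hb := natDegree_det_le_sum P
      (fun i => if ((ω (r i) : Fin m) : ℕ) < j then t - 1 else 0) ?_
    · refine hb.trans ?_
      rw [Finset.sum_ite, Finset.sum_const, Finset.sum_const_zero, add_zero, smul_eq_mul]
      exact Nat.mul_le_mul_right _ hcard
    · intro i l
      by_cases hcase : ((ω (r i) : Fin m) : ℕ) < j
      · simp only [hP, Matrix.of_apply, hcase, if_true]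
        refine (Polynomial.natDegree_add_le _ _).trans ?_
        simp only [Polynomial.natDegree_C, max_eq_right (Nat.zero_le _)]
        exact (Polynomial.natDegree_C_mul_le _ _).trans (by simp)
      · simp [hP, hcase]
  have hdet : aeval α P.det ≠ 0 := by
    intro h
    have hdvd := minpoly.dvd K α h
    have := Polynomial.natDegree_le_of_dvd hdvd hPne
    omega
  rw [hB, Matrix.det_smul]
  refine mul_ne_zero (pow_ne_zero _ hα0) ?_
  have hmap : (P.map (aeval α)).det = aeval α P.det :=
    (RingHom.map_det ((Polynomial.aeval α : K[X] →ₐ[K] L) : K[X] →+* L) P).symm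
  rw [hmap]
  exact hdet
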